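/- Let F be a field and L a nonzero finite-dimensional F-vector space with |F| ≥ dim L + 1 (for instance, F infinite). Then there exists a bilinear multiplication on L making it an F-algebra such that for every field extension E/F, the only automorphism of the algebra L_E = L ⊗_F E is the identity. -/

import Mathlib

open scoped TensorProduct

/-- **Lemma 2** (Gordeev–Popov): if `L` is a nonzero finite-dimensional vector space over a
field `F` with `|F| ≥ dim L + 1` (e.g. `F` infinite), then there is a bilinear
multiplication `m` on `L` such that for every field extension `E/F` the algebra
`L_E = L ⊗_F E` (with the `E`-bilinear extension `mE` of `m`) has only the identity
automorphism. -/
theorem stmt2 {F L : Type*} [Field F] [AddCommGroup L] [Module F L]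
    [FiniteDimensional F L] (hL : Nontrivial L)
    (hF : (Module.finrank F L : Cardinal) + 1 ≤ Cardinal.mk F) :
    ∃ m : L →ₗ[F] L →ₗ[F] L,
      ∀ (E : Type*) [Field E] [Algebra F E]
        (mE : E ⊗[F] L →ₗ[E] E ⊗[F] L →ₗ[E] E ⊗[F] L),
        (∀ (a b : E) (x y : L),
            mE (a ⊗ₜ[F] x) (b ⊗ₜ[F] y) = (a * b) ⊗ₜ[F] m x y) →
        ∀ σ : E ⊗[F] L ≃ₗ[E] E ⊗[F] L,
          (∀ u v : E ⊗[F] L, σ (mE u v) = mE (σ u) (σ v)) →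
          σ = LinearEquiv.refl E (E ⊗[F] L) := by
  classical
  obtain ⟨m', hm'⟩ : ∃ m', Module.finrank F L = m' + 1 :=
    ⟨Module.finrank F L - 1,
      (Nat.succ_pred_eq_of_pos (Module.finrank_pos)).symm⟩
  let b : Module.Basis (Fin (m' + 1)) F L := (Module.finBasis F L).reindex (finCongr hm')
  -- an embedding of `Fin (finrank + 1)` into `F`
  have hcard : Cardinal.mk (ULift (Fin (Module.finrank F L + 1))) ≤ Cardinal.mk F := by
    simpa using hF
  obtain ⟨g0⟩ := (Cardinal.le_def _ _).mp hcard
  let g : Fin (Module.finrank F L + 1) ↪ F := (Equiv.ulift.symm.toEmbedding.trans g0)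
  set s : Finset F := Finset.univ.image g with hs
  have hscard : s.card = Module.finrank F L + 1 := by
    rw [hs, Finset.card_image_of_injective _ g.injective, Finset.card_univ,
      Fintype.card_fin]
  set t : Finset F := s \ {0, 1} with ht
  have htcard : m' ≤ t.card := by
    have h2 : ({0, 1} : Finset F).card ≤ 2 := by
      apply (Finset.card_insert_le _ _).trans
      simp
    have h3 := Finset.le_card_sdiff ({0, 1} : Finset F) s
    rw [← ht] at h3
    rw [hm'] at hscard
    omega
  let f : Fin m' → F := fun i => (t.equivFin.symm (Fin.castLE htcard i) : F)
  have hf_inj : Function.Injective f := fun i j h => by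
    have := t.equivFin.symm.injective (Subtype.ext h)
    exact Fin.castLE_injective htcard this
  have hf_mem : ∀ i, f i ≠ 0 ∧ f i ≠ 1 := by
    intro i
    have hmem : f i ∈ s \ {0, 1} := (t.equivFin.symm (Fin.castLE htcard i)).2
    have := (Finset.mem_sdiff.mp hmem).2
    simp only [Finset.mem_insert, Finset.mem_singleton] at this
    push_neg at this
    exact this
  -- the scalars
  let c : Fin (m' + 1) → F := fun j => if h : j = 0 then 1 else f (j.pred h)
  have hc0 : c 0 = 1 := by simp [c]
  have hcne0 : ∀ j, c j ≠ 0 := by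
    intro j
    by_cases h : j = 0
    · simp [c, h]
    · simp only [c, dif_neg h]
      exact (hf_mem _).1
  have hcinj : Function.Injective c := by
    intro i j hij
    by_cases hi : i = 0 <;> by_cases hj : j = 0
    · rw [hi, hj]
    · exfalso; rw [hi] at hij; simp only [c, dif_pos rfl, dif_neg hj] at hij
      exact (hf_mem _).2 hij.symm
    · exfalso; rw [hj] at hij; simp only [c, dif_pos rfl, dif_neg hi] at hij
      exact (hf_mem _).2 hij
    · simp only [c, dif_neg hi, dif_neg hj] at hij
      have := hf_inj hij
      rwa [Fin.pred_inj] at this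
  -- the multiplication table
  let M : Fin (m' + 1) → Fin (m' + 1) → L := fun i j =>
    if j = 0 then b i else if i = 0 then c j • b j
      else if i = j then b 0 + b i else 0
  let mul : L →ₗ[F] L →ₗ[F] L := b.constr F fun i => b.constr F fun j => M i j
  have hmul : ∀ i j, mul (b i) (b j) = M i j := by
    intro i j
    simp [mul, Module.Basis.constr_basis]
  refine ⟨mul, ?_⟩
  intro E _ _ mE hmE σ hσ
  let f1 : Module.Basis (Fin (m' + 1)) E (E ⊗[F] L) := b.baseChange E
  have hf1 : ∀ i, f1 i = (1 : E) ⊗ₜ[F] b i := fun i => Module.Basis.baseChange_apply ..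
  have hmEb : ∀ i j, mE (f1 i) (f1 j) = (1 : E) ⊗ₜ[F] M i j := by
    intro i j
    rw [hf1, hf1, hmE, one_mul, hmul]
  let ac : Fin (m' + 1) → E := fun j => algebraMap F E (c j)
  have hac0 : ac 0 = 1 := by simp [ac, hc0]
  have hacne : ∀ j, ac j ≠ 0 := fun j => by
    simp only [ac, ne_eq, map_eq_zero]; exact hcne0 j
  have hacinj : Function.Injective ac :=
    (algebraMap F E).injective.comp hcinj
  -- the diagonal operator
  set D : E ⊗[F] L →ₗ[E] E ⊗[F] L := mE (f1 0) with hDdef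
  have hD : ∀ j, D (f1 j) = ac j • f1 j := by
    intro j
    have hM0 : M 0 j = c j • b j := by
      by_cases h : j = 0 <;> simp [M, h, hc0]
    rw [hDdef, hmEb, hM0, hf1 j, TensorProduct.tmul_smul, ← algebraMap_smul E (c j)]
  have hDcoord : ∀ (u : E ⊗[F] L) (i), f1.repr (D u) i = ac i * f1.repr u i := by
    intro u i
    have h : (f1.coord i).comp D = ac i • f1.coord i := by
      apply f1.ext
      intro j
      simp only [LinearMap.comp_apply, LinearMap.smul_apply, hD, map_smul,
        smul_eq_mul, Module.Basis.coord_apply, Module.Basis.repr_self, Finsupp.smul_apply]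
      rcases eq_or_ne i j with rfl | hij
      · simp
      · simp [Finsupp.single_apply, Ne.symm hij]
    have := LinearMap.congr_fun h u
    simpa [Module.Basis.coord_apply] using this
  have hDinj : Function.Injective D := by
    intro u v huv
    apply f1.repr.injective
    ext i
    have h := congrArg (fun w => f1.repr w i) huv
    simp only [hDcoord] at h
    exact mul_left_cancel₀ (hacne i) h
  -- f1 0 is a right unit
  have hru : ∀ u, mE u (f1 0) = u := by
    intro u
    have h : mE.flip (f1 0) = LinearMap.id := by
      apply f1.ext
      intro i
      have hMi0 : M i 0 = b i := by simp [M]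
      rw [LinearMap.flip_apply, hmEb, hMi0, LinearMap.id_apply, ← hf1]
    have := LinearMap.congr_fun h u
    simpa using this
  -- σ fixes f1 0
  have hσ0 : σ (f1 0) = f1 0 := by
    have h1 : D (σ (f1 0)) = f1 0 := by
      have h := hσ (σ.symm (f1 0)) (f1 0)
      rw [hru, σ.apply_symm_apply] at h
      exact h.symm
    apply hDinj
    rw [h1, hD, hac0, one_smul]
  -- σ commutes with D
  have hcomm : ∀ u, σ (D u) = D (σ u) := by
    intro u
    have h := hσ (f1 0) u
    rwa [hσ0] at h
  -- σ is diagonal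
  have hdiag : ∀ i j, i ≠ j → f1.repr (σ (f1 j)) i = 0 := by
    intro i j hij
    have h := congrArg (fun w => f1.repr w i) (hcomm (f1 j))
    simp only [hD, map_smul, Finsupp.smul_apply, smul_eq_mul, hDcoord] at h
    have h2 : (ac j - ac i) * f1.repr (σ (f1 j)) i = 0 := by linear_combination h
    rcases mul_eq_zero.mp h2 with h3 | h3
    · exact absurd (sub_eq_zero.mp h3) fun he => hij (hacinj he).symm
    · exact h3
  have hσdiag : ∀ j, σ (f1 j) = (f1.repr (σ (f1 j)) j) • f1 j := by
    intro j
    have hrepr : f1.repr (σ (f1 j)) = Finsupp.single j (f1.repr (σ (f1 j)) j) := by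
      ext i
      rcases eq_or_ne i j with rfl | hij
      · simp
      · rw [Finsupp.single_apply, if_neg (Ne.symm hij)]
        exact hdiag i j hij
    calc σ (f1 j) = f1.repr.symm (f1.repr (σ (f1 j))) := (f1.repr.symm_apply_apply _).symm
      _ = f1.repr.symm (Finsupp.single j (f1.repr (σ (f1 j)) j)) := by rw [← hrepr]
      _ = (f1.repr (σ (f1 j)) j) • f1 j := by rw [Module.Basis.repr_symm_single]
  -- σ fixes all basis vectors
  have hfix : ∀ j, σ (f1 j) = f1 j := by
    intro j
    by_cases hj : j = 0
    · rw [hj]; exact hσ0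
    · set tj : E := f1.repr (σ (f1 j)) j with htj
      have hMjj : M j j = b 0 + b j := by simp [M, hj]
      have hprod : mE (f1 j) (f1 j) = f1 0 + f1 j := by
        rw [hmEb, hMjj, TensorProduct.tmul_add, ← hf1, ← hf1]
      have h := hσ (f1 j) (f1 j)
      rw [hprod, map_add, hσ0, hσdiag j, ← htj] at h
      have h2 : (mE (tj • f1 j)) (tj • f1 j) = (tj * tj) • (f1 0 + f1 j) := by
        rw [LinearMap.map_smul₂, map_smul, hprod, smul_smul]
      rw [h2] at h
      -- h : f1 0 + tj • f1 j = (tj * tj) • (f1 0 + f1 j)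
      have hj' : (0 : Fin (m' + 1)) ≠ j := fun hh => hj hh.symm
      have h0 := congrArg (fun w => f1.repr w 0) h
      have hjj := congrArg (fun w => f1.repr w j) h
      simp only [map_add, map_smul, Finsupp.add_apply, Finsupp.smul_apply,
        smul_eq_mul, Module.Basis.repr_self, Finsupp.single_eq_same,
        Finsupp.single_eq_of_ne hj, Finsupp.single_eq_of_ne hj',
        mul_zero, mul_one, add_zero, zero_add, mul_add] at h0 hjj
      -- h0 : 1 = tj * tj,  hjj : tj = tj * tj
      have htj1 : tj = 1 := by
        rw [hjj]; rw [← h0]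
      rw [hσdiag j, ← htj, htj1, one_smul]
  apply LinearEquiv.toLinearMap_injective
  apply f1.ext
  intro j
  simpa using hfix j
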